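/- Fix t with 0 < t < (3 − √3)/3 and define α_t : [0, π/6] → ℝ by α_t(γ) = arcsin(h_t(γ)/(1−t)), where h_t(γ) = (cos γ − √((1−t)² − sin²γ)) · sin γ. Then α_t is strictly increasing and strictly convex on [0, π/6]. -/

import Mathlib

open Real Set


lemma gderiv {r : ℝ} (hr0 : 0 < r) (hr1 : r < 1) (β : ℝ) :
    HasDerivAt (fun β => Real.arctan (r * Real.sin β / (1 - r * Real.cos β)))
      (r * (Real.cos β - r) / (1 + r ^ 2 - 2 * r * Real.cos β)) β := by
  have hden : 0 < 1 - r * Real.cos β := by nlinarith [Real.cos_le_one β, Real.neg_one_le_cos β]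
  have hD : 0 < 1 + r ^ 2 - 2 * r * Real.cos β := by nlinarith [Real.cos_le_one β]
  have hs := Real.sin_sq_add_cos_sq β
  have h1 : HasDerivAt (fun β : ℝ => r * Real.sin β) (r * Real.cos β) β :=
    (Real.hasDerivAt_sin β).const_mul r
  have h2 : HasDerivAt (fun β : ℝ => 1 - r * Real.cos β) (r * Real.sin β) β := by
    simpa using (((Real.hasDerivAt_cos β).const_mul r).const_sub 1)
  have h3 := h1.div h2 hden.ne'
  have h4 := (Real.hasDerivAt_arctan (r * Real.sin β / (1 - r * Real.cos β))).comp β h3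
  have hnum : r * Real.cos β * (1 - r * Real.cos β) - r * Real.sin β * (r * Real.sin β)
      = r * (Real.cos β - r) := by linear_combination (-(r^2)) * hs
  have key : 1 + (r * Real.sin β / (1 - r * Real.cos β)) ^ 2
      = (1 + r ^ 2 - 2 * r * Real.cos β) / (1 - r * Real.cos β) ^ 2 := by
    field_simp
    linear_combination (r^2) * hs
  refine h4.congr_deriv ?_
  rw [key, hnum]
  field_simp

lemma gmono {r : ℝ} (hr0 : 0 < r) (hr1 : r < 1) :
    StrictMonoOn (fun β => Real.arctan (r * Real.sin β / (1 - r * Real.cos β)))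
      (Icc 0 (Real.arccos r)) := by
  apply strictMonoOn_of_deriv_pos (convex_Icc _ _)
  · exact (Differentiable.continuous (fun β => (gderiv hr0 hr1 β).differentiableAt)).continuousOn
  · intro β hβ
    rw [interior_Icc] at hβ
    rw [(gderiv hr0 hr1 β).deriv]
    have hβπ : Real.arccos r ≤ π := Real.arccos_le_pi r
    have hc : r < Real.cos β := by
      have := Real.cos_lt_cos_of_nonneg_of_le_pi (le_of_lt hβ.1) hβπ hβ.2
      rwa [Real.cos_arccos (by linarith) (by linarith)] at this
    have hD : 0 < 1 + r ^ 2 - 2 * r * Real.cos β := by nlinarith [Real.cos_le_one β]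
    exact div_pos (mul_pos hr0 (by linarith)) hD

lemma gconc {r : ℝ} (hr0 : 0 < r) (hr1 : r < 1) :
    StrictConcaveOn ℝ (Icc 0 (Real.arccos r))
      (fun β => Real.arctan (r * Real.sin β / (1 - r * Real.cos β))) := by
  apply strictConcaveOn_of_deriv2_neg (convex_Icc _ _)
  · exact (Differentiable.continuous (fun β => (gderiv hr0 hr1 β).differentiableAt)).continuousOn
  · intro β hβ
    rw [interior_Icc] at hβ
    have hg' : deriv (fun β => Real.arctan (r * Real.sin β / (1 - r * Real.cos β)))
        = fun β => r * (Real.cos β - r) / (1 + r ^ 2 - 2 * r * Real.cos β) :=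
      funext fun β => (gderiv hr0 hr1 β).deriv
    have hD : 0 < 1 + r ^ 2 - 2 * r * Real.cos β := by nlinarith [Real.cos_le_one β]
    have h1 : HasDerivAt (fun β : ℝ => r * (Real.cos β - r)) (-(r * Real.sin β)) β := by
      simpa [mul_comm] using (((Real.hasDerivAt_cos β).sub_const r).const_mul r)
    have h2 : HasDerivAt (fun β : ℝ => 1 + r ^ 2 - 2 * r * Real.cos β)
        (2 * r * Real.sin β) β := by
      simpa [mul_assoc] using (((Real.hasDerivAt_cos β).const_mul (2*r)).const_sub (1 + r^2))
    have h3 := h1.div h2 hD.ne'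
    have : deriv^[2] (fun β => Real.arctan (r * Real.sin β / (1 - r * Real.cos β))) β
        = (-(r * Real.sin β) * (1 + r ^ 2 - 2 * r * Real.cos β)
            - r * (Real.cos β - r) * (2 * r * Real.sin β))
          / (1 + r ^ 2 - 2 * r * Real.cos β) ^ 2 := by
      show deriv (deriv _) β = _
      rw [hg']
      exact h3.deriv
    rw [this]
    have hsβ : 0 < Real.sin β := by
      apply Real.sin_pos_of_pos_of_lt_pi hβ.1
      linarith [hβ.2, Real.arccos_le_pi r]
    apply div_neg_of_neg_of_pos _ (by positivity)
    have : -(r * Real.sin β) * (1 + r ^ 2 - 2 * r * Real.cos β)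
        - r * (Real.cos β - r) * (2 * r * Real.sin β)
        = -(r * Real.sin β * (1 - r ^ 2)) := by ring
    rw [this]
    have : 0 < r * Real.sin β * (1 - r ^ 2) := mul_pos (mul_pos hr0 hsβ) (by nlinarith)
    linarith

lemma basic_facts {r : ℝ} (hr : 1/2 < r) (hr1 : r < 1) {γ : ℝ} (hγ : γ ∈ Icc 0 (π/6)) :
    0 ≤ Real.sin γ ∧ Real.sin γ ≤ 1/2 ∧ 0 < Real.cos γ ∧ Real.cos γ ≤ 1 ∧
    Real.sqrt (r ^ 2 - Real.sin γ ^ 2) ^ 2 = r ^ 2 - Real.sin γ ^ 2 ∧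
    0 < Real.sqrt (r ^ 2 - Real.sin γ ^ 2) ∧
    Real.sqrt (r ^ 2 - Real.sin γ ^ 2) < Real.cos γ := by
  obtain ⟨hγ0, hγ6⟩ := hγ
  have hπ := Real.pi_pos
  have hsin0 : 0 ≤ Real.sin γ := Real.sin_nonneg_of_nonneg_of_le_pi hγ0 (by linarith)
  have hsin2 : Real.sin γ ≤ 1/2 := by
    have := Real.strictMonoOn_sin.monotoneOn ⟨by linarith, by linarith⟩
      ⟨by linarith, by linarith⟩ hγ6
    simpa [Real.sin_pi_div_six] using this
  have hcos0 : 0 < Real.cos γ := Real.cos_pos_of_mem_Ioo ⟨by linarith, by linarith⟩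
  have hpyth := Real.sin_sq_add_cos_sq γ
  have hsq : 0 < r ^ 2 - Real.sin γ ^ 2 := by nlinarith
  have hS2 : Real.sqrt (r ^ 2 - Real.sin γ ^ 2) ^ 2 = r ^ 2 - Real.sin γ ^ 2 :=
    Real.sq_sqrt hsq.le
  have hSpos : 0 < Real.sqrt (r ^ 2 - Real.sin γ ^ 2) := Real.sqrt_pos.2 hsq
  have hSc : Real.sqrt (r ^ 2 - Real.sin γ ^ 2) < Real.cos γ := by
    have h2 : Real.sqrt (r ^ 2 - Real.sin γ ^ 2) ^ 2 < Real.cos γ ^ 2 := by nlinarith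
    exact lt_of_pow_lt_pow_left₀ 2 hcos0.le h2
  exact ⟨hsin0, hsin2, hcos0, Real.cos_le_one γ, hS2, hSpos, hSc⟩

lemma key_facts {r : ℝ} (hr : 1/2 < r) (hr1 : r < 1) {γ : ℝ} (hγ : γ ∈ Icc 0 (π/6)) :
    Real.arcsin (((Real.cos γ - Real.sqrt (r ^ 2 - Real.sin γ ^ 2)) * Real.sin γ) / r)
      ∈ Icc 0 (Real.arccos r) ∧
    Real.arctan (r * Real.sin (Real.arcsin
        (((Real.cos γ - Real.sqrt (r ^ 2 - Real.sin γ ^ 2)) * Real.sin γ) / r))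
      / (1 - r * Real.cos (Real.arcsin
        (((Real.cos γ - Real.sqrt (r ^ 2 - Real.sin γ ^ 2)) * Real.sin γ) / r)))) = γ := by
  obtain ⟨hsin0, hsin2, hcos0, hcos1, hS2, hSpos, hSlt⟩ := basic_facts hr hr1 hγ
  obtain ⟨hγ0, hγ6⟩ := hγ
  have hπ := Real.pi_pos
  have hr0 : (0:ℝ) < r := by linarith
  have hpyth := Real.sin_sq_add_cos_sq γ
  set S := Real.sqrt (r ^ 2 - Real.sin γ ^ 2) with hS
  have hρ : 0 < Real.cos γ - S := by linarith
  set x := ((Real.cos γ - S) * Real.sin γ) / r with hx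
  have hx0 : 0 ≤ x := div_nonneg (mul_nonneg hρ.le hsin0) hr0.le
  have hx1 : x < 1 := by
    rw [hx, div_lt_one hr0]; nlinarith
  have hsinA : Real.sin (Real.arcsin x) = x := Real.sin_arcsin (by linarith) hx1.le
  have hρc : (Real.cos γ - S) * Real.cos γ < 1 - r ^ 2 := by nlinarith
  have hρc1 : (Real.cos γ - S) * Real.cos γ < 1 := by nlinarith
  have hkey : r ^ 2 - ((Real.cos γ - S) * Real.sin γ) ^ 2
      = (1 - (Real.cos γ - S) * Real.cos γ) ^ 2 := by
    linear_combination (1 - (Real.cos γ - S) ^ 2) * hpyth - hS2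
  have hcosA : Real.cos (Real.arcsin x) = (1 - (Real.cos γ - S) * Real.cos γ) / r := by
    rw [Real.cos_arcsin]
    have h1 : 1 - x ^ 2 = ((1 - (Real.cos γ - S) * Real.cos γ) / r) ^ 2 := by
      rw [hx]; field_simp; linear_combination hkey
    rw [h1, Real.sqrt_sq (div_nonneg (by linarith) hr0.le)]
  have hrcosA : r < Real.cos (Real.arcsin x) := by
    rw [hcosA, lt_div_iff₀ hr0]; nlinarith
  have hA0 : 0 ≤ Real.arcsin x := Real.arcsin_nonneg.2 hx0
  have hA2 : Real.arcsin x ≤ π/2 := Real.arcsin_le_pi_div_two x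
  have hAlt : Real.arcsin x < Real.arccos r := by
    have h1 : Real.arccos (Real.cos (Real.arcsin x)) = Real.arcsin x :=
      Real.arccos_cos hA0 (by linarith)
    have h2 := Real.strictAntiOn_arccos ⟨by linarith, hr1.le⟩
      ⟨by linarith [Real.neg_one_le_cos (Real.arcsin x)], Real.cos_le_one _⟩ hrcosA
    rwa [h1] at h2
  refine ⟨⟨hA0, hAlt.le⟩, ?_⟩
  rw [hsinA, hcosA]
  have e1 : r * x = (Real.cos γ - S) * Real.sin γ := by rw [hx]; field_simp
  have e2 : 1 - r * ((1 - (Real.cos γ - S) * Real.cos γ) / r)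
      = (Real.cos γ - S) * Real.cos γ := by field_simp; ring
  rw [e1, e2]
  have e3 : (Real.cos γ - S) * Real.sin γ / ((Real.cos γ - S) * Real.cos γ) = Real.tan γ := by
    rw [Real.tan_eq_sin_div_cos, mul_div_mul_left _ _ hρ.ne']
  rw [e3]
  exact Real.arctan_tan (by linarith) (by linarith)

lemma fmono {r : ℝ} (hr : 1/2 < r) (hr1 : r < 1) :
    StrictMonoOn (fun γ : ℝ => Real.arcsin
      (((Real.cos γ - Real.sqrt (r ^ 2 - Real.sin γ ^ 2)) * Real.sin γ) / r))
      (Icc 0 (π/6)) := by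
  have hπ := Real.pi_pos
  have hr0 : (0:ℝ) < r := by linarith
  intro γ₁ hγ₁ γ₂ hγ₂ hlt
  obtain ⟨s10, s12, c10, c11, S12, S1p, S1c⟩ := basic_facts hr hr1 hγ₁
  obtain ⟨s20, s22, c20, c21, S22, S2p, S2c⟩ := basic_facts hr hr1 hγ₂
  have hsinlt : Real.sin γ₁ < Real.sin γ₂ :=
    Real.strictMonoOn_sin ⟨by linarith [hγ₁.1], by linarith [hγ₁.2]⟩
      ⟨by linarith [hγ₂.1], by linarith [hγ₂.2]⟩ hlt
  have hclt : Real.cos γ₂ ≤ Real.cos γ₁ :=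
    Real.cos_le_cos_of_nonneg_of_le_pi hγ₁.1 (by linarith [hγ₂.2]) hlt.le
  set S1 := Real.sqrt (r ^ 2 - Real.sin γ₁ ^ 2)
  set S2 := Real.sqrt (r ^ 2 - Real.sin γ₂ ^ 2)
  have hdiff : (S1 - S2) * (S1 + S2) = (Real.cos γ₁ - Real.cos γ₂) * (Real.cos γ₁ + Real.cos γ₂) := by
    linear_combination S12 - S22 - Real.sin_sq_add_cos_sq γ₁ + Real.sin_sq_add_cos_sq γ₂
  have hkey : (Real.cos γ₁ - Real.cos γ₂) * (S1 + S2) ≤ (S1 - S2) * (S1 + S2) := by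
    rw [hdiff]
    exact mul_le_mul_of_nonneg_left (by linarith) (by linarith)
  have hρmono : Real.cos γ₁ - S1 ≤ Real.cos γ₂ - S2 := by
    have := le_of_mul_le_mul_right hkey (by linarith : (0:ℝ) < S1 + S2)
    linarith
  have hhlt : (Real.cos γ₁ - S1) * Real.sin γ₁ < (Real.cos γ₂ - S2) * Real.sin γ₂ := by
    have h1 : (Real.cos γ₁ - S1) * Real.sin γ₁ ≤ (Real.cos γ₂ - S2) * Real.sin γ₁ :=
      mul_le_mul_of_nonneg_right hρmono s10
    have h2 : (Real.cos γ₂ - S2) * Real.sin γ₁ < (Real.cos γ₂ - S2) * Real.sin γ₂ :=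
      mul_lt_mul_of_pos_left hsinlt (by linarith)
    linarith
  have bound : ∀ γ ∈ Icc (0:ℝ) (π/6),
      ((Real.cos γ - Real.sqrt (r ^ 2 - Real.sin γ ^ 2)) * Real.sin γ) / r ∈ Icc (-1:ℝ) 1 := by
    intro γ hγ
    obtain ⟨s0, s2, c0, c1, Ss2, Sp, Sc⟩ := basic_facts hr hr1 hγ
    refine ⟨?_, ?_⟩
    · have : (0:ℝ) ≤ ((Real.cos γ - Real.sqrt (r ^ 2 - Real.sin γ ^ 2)) * Real.sin γ) / r :=
        div_nonneg (mul_nonneg (by linarith) s0) hr0.le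
      linarith
    · rw [div_le_one hr0]; nlinarith
  exact Real.strictMonoOn_arcsin (bound γ₁ hγ₁) (bound γ₂ hγ₂)
    ((div_lt_div_iff_of_pos_right hr0).2 hhlt)

/-- For fixed `t ∈ (0, (3-√3)/3)`, the angle function
`α_t(γ) = arcsin(h_t(γ)/(1−t))`, where `h_t(γ) = (cos γ − √((1−t)² − sin²γ)) · sin γ`,
is strictly increasing and strictly convex on `[0, π/6]`. -/
theorem alpha_strictMono_strictConvex (t : ℝ) (ht0 : 0 < t) (ht1 : t < (3 - Real.sqrt 3) / 3) :
    StrictMonoOn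
      (fun γ : ℝ => Real.arcsin
        (((Real.cos γ - Real.sqrt ((1 - t) ^ 2 - Real.sin γ ^ 2)) * Real.sin γ) / (1 - t)))
      (Set.Icc 0 (π / 6)) ∧
    StrictConvexOn ℝ (Set.Icc 0 (π / 6))
      (fun γ : ℝ => Real.arcsin
        (((Real.cos γ - Real.sqrt ((1 - t) ^ 2 - Real.sin γ ^ 2)) * Real.sin γ) / (1 - t))) := by
  have h3 : (3:ℝ)/2 < Real.sqrt 3 := by
    nlinarith [Real.sq_sqrt (show (0:ℝ) ≤ 3 by norm_num), Real.sqrt_nonneg 3]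
  have hr : 1/2 < 1 - t := by
    have : Real.sqrt 3 / 3 < 1 - t := by linarith
    linarith
  have hr1 : 1 - t < 1 := by linarith
  have hr0 : (0:ℝ) < 1 - t := by linarith
  refine ⟨fmono hr hr1, ⟨convex_Icc _ _, fun x hx y hy hxy a b ha hb hab => ?_⟩⟩
  simp only [smul_eq_mul]
  obtain ⟨hxI, hxid⟩ := key_facts hr hr1 hx
  obtain ⟨hyI, hyid⟩ := key_facts hr hr1 hy
  have hzmem : a * x + b * y ∈ Icc 0 (π/6) := by
    have := (convex_Icc (0:ℝ) (π/6)) hx hy ha.le hb.le hab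
    simpa [smul_eq_mul] using this
  obtain ⟨hzI, hzid⟩ := key_facts hr hr1 hzmem
  have hm := fmono hr hr1
  have hneq : Real.arcsin (((Real.cos x - Real.sqrt ((1-t) ^ 2 - Real.sin x ^ 2)) * Real.sin x) / (1-t))
      ≠ Real.arcsin (((Real.cos y - Real.sqrt ((1-t) ^ 2 - Real.sin y ^ 2)) * Real.sin y) / (1-t)) := by
    rcases hxy.lt_or_gt with h | h
    · exact (hm hx hy h).ne
    · exact (hm hy hx h).ne'
  have hcc := (gconc hr0 hr1).2 hxI hyI hneq ha hb hab
  simp only [smul_eq_mul] at hcc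
  rw [hxid, hyid] at hcc
  have hcomb : a * Real.arcsin (((Real.cos x - Real.sqrt ((1-t) ^ 2 - Real.sin x ^ 2)) * Real.sin x) / (1-t))
      + b * Real.arcsin (((Real.cos y - Real.sqrt ((1-t) ^ 2 - Real.sin y ^ 2)) * Real.sin y) / (1-t))
      ∈ Icc 0 (Real.arccos (1-t)) := by
    have := (convex_Icc (0:ℝ) (Real.arccos (1-t))) hxI hyI ha.le hb.le hab
    simpa [smul_eq_mul] using this
  have hlt := ((gmono hr0 hr1).lt_iff_lt hzI hcomb).1 (by rw [hzid]; exact hcc)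
  exact hlt
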